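/- If the set of functions {(x, δ) ↦ f(x; θ + δ) : θ} is dense (in the topology of uniform convergence on compacta) in C(ℝ^{m+k}, ℝ^n), then for every pair of continuous functions c, b : ℝ^m → ℝ^n, every nonzero δ₀ ∈ ℝ^k, every compact K ⊆ ℝ^m, and every ε > 0, there exists θ such that sup_{x∈K} ‖f(x; θ) − c(x)‖ < ε and sup_{x∈K} ‖f(x; θ + δ₀) − b(x)‖ < ε. -/
import Mathlib


/-- Universal approximation in parameter space implies existence of a dormant
trojan parameter `θ` (clean behavior `c` at `θ`, backdoor behavior `b` at
`θ + δ₀`). -/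
theorem stmt_12 (m k n : ℕ)
    (f : (Fin m → ℝ) → (Fin k → ℝ) → (Fin n → ℝ))
    (hdense : ∀ g : (Fin m → ℝ) × (Fin k → ℝ) → (Fin n → ℝ), Continuous g →
      ∀ K' : Set ((Fin m → ℝ) × (Fin k → ℝ)), IsCompact K' → ∀ ε > (0 : ℝ),
        ∃ θ : Fin k → ℝ, ∀ p ∈ K', ‖f p.1 (θ + p.2) - g p‖ < ε)
    (c b : (Fin m → ℝ) → (Fin n → ℝ)) (hc : Continuous c) (hb : Continuous b)
    (δ₀ : Fin k → ℝ) (hδ₀ : δ₀ ≠ 0)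
    (K : Set (Fin m → ℝ)) (hK : IsCompact K)
    (ε : ℝ) (hε : 0 < ε) :
    ∃ θ : Fin k → ℝ, (∀ x ∈ K, ‖f x θ - c x‖ < ε) ∧
      (∀ x ∈ K, ‖f x (θ + δ₀) - b x‖ < ε) := by
  -- denominator ∑ δ₀ i ^ 2 is positive
  have hden : (0 : ℝ) < ∑ i, δ₀ i ^ 2 := by
    have h1 : ∃ i, δ₀ i ≠ 0 := by
      by_contra h
      push_neg at h
      exact hδ₀ (funext h)
    obtain ⟨i, hi⟩ := h1
    apply Finset.sum_pos'
    · intro j _; positivity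
    · exact ⟨i, Finset.mem_univ i, by positivity⟩
  set t : (Fin k → ℝ) → ℝ := fun δ => (∑ i, δ i * δ₀ i) / (∑ i, δ₀ i ^ 2) with ht
  have ht0 : t 0 = 0 := by simp [ht]
  have ht1 : t δ₀ = 1 := by
    simp only [ht]
    rw [div_eq_one_iff_eq hden.ne']
    exact Finset.sum_congr rfl fun i _ => (sq (δ₀ i)).symm
  have htc : Continuous t := by
    apply Continuous.div_const
    exact continuous_finset_sum _ fun i _ => ((continuous_apply i).mul continuous_const)
  set g : (Fin m → ℝ) × (Fin k → ℝ) → (Fin n → ℝ) :=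
    fun p => c p.1 + t p.2 • (b p.1 - c p.1) with hg
  have hgc : Continuous g := by
    apply Continuous.add (hc.comp continuous_fst)
    exact (htc.comp continuous_snd).smul ((hb.comp continuous_fst).sub (hc.comp continuous_fst))
  have hKc : IsCompact (K ×ˢ ({0, δ₀} : Set (Fin k → ℝ))) :=
    hK.prod (((Set.finite_singleton δ₀).insert 0).isCompact)
  obtain ⟨θ, hθ⟩ := hdense g hgc _ hKc ε hε
  refine ⟨θ, fun x hx => ?_, fun x hx => ?_⟩
  · have := hθ (x, 0) ⟨hx, Or.inl rfl⟩
    simpa [hg, ht0] using this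
  · have := hθ (x, δ₀) ⟨hx, Or.inr rfl⟩
    simpa [hg, ht1] using this
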